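/- Kochergin's pull-back lemma: let T: I → I preserve Lebesgue measure, f ≥ m_f > 0 with f ∈ L¹(I), and define R_t(x) = T^{r(x,t)}x where r(x,t) = max{r : S_r f(x) ≤ t}. Then for any measurable set S ⊆ I, Leb(R_t^{-1}(S)) ≤ ∫_S (f(x)/m_f + 1) dx. -/

import Mathlib

open MeasureTheory ENNReal

/-- The `r`-th Birkhoff sum of `f` along the orbit of `x` under `T`. -/
noncomputable def birkSum (T f : ℝ → ℝ) (r : ℕ) (x : ℝ) : ℝ :=
  ∑ i ∈ Finset.range r, f (T^[i] x)

/-- `hitCount T f x t = max {r : S_r f(x) ≤ t}`. -/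
noncomputable def hitCount (T f : ℝ → ℝ) (x t : ℝ) : ℕ :=
  sSup {r : ℕ | birkSum T f r x ≤ t}

section aux

variable {T g : ℝ → ℝ} {m : ℝ}

lemma birkSum_zero (T g : ℝ → ℝ) (x : ℝ) : birkSum T g 0 x = 0 := by
  simp [birkSum]

lemma birkSum_succ (T g : ℝ → ℝ) (r : ℕ) (x : ℝ) :
    birkSum T g (r + 1) x = birkSum T g r x + g (T^[r] x) :=
  Finset.sum_range_succ _ _

lemma birkSum_ge (hg : ∀ x, m ≤ g x) (r : ℕ) (x : ℝ) :
    (r : ℝ) * m ≤ birkSum T g r x := by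
  have h : ∑ _i ∈ Finset.range r, m ≤ birkSum T g r x :=
    Finset.sum_le_sum fun i _ => hg _
  simpa [mul_comm] using h

lemma hitCount_ub (hm : 0 < m) (hg : ∀ x, m ≤ g x) {x t : ℝ} {r : ℕ}
    (h : birkSum T g r x ≤ t) : r ≤ Nat.floor (t / m) := by
  have h1 : (r : ℝ) * m ≤ t := le_trans (birkSum_ge hg r x) h
  exact Nat.le_floor ((le_div_iff₀ hm).2 h1)

lemma hitCount_le (hm : 0 < m) (hg : ∀ x, m ≤ g x) (x t : ℝ) :
    hitCount T g x t ≤ Nat.floor (t / m) :=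
  csSup_le' fun _ hr => hitCount_ub hm hg hr

lemma hitCount_spec (hm : 0 < m) (hg : ∀ x, m ≤ g x) (x : ℝ) {t : ℝ} (ht : 0 ≤ t) :
    birkSum T g (hitCount T g x t) x ≤ t ∧ t < birkSum T g (hitCount T g x t + 1) x := by
  have hbdd : BddAbove {r : ℕ | birkSum T g r x ≤ t} :=
    ⟨Nat.floor (t / m), fun _ hr => hitCount_ub hm hg hr⟩
  have hne : {r : ℕ | birkSum T g r x ≤ t}.Nonempty :=
    ⟨0, by simpa [Set.mem_setOf_eq, birkSum_zero] using ht⟩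
  have hmem := Nat.sSup_mem hne hbdd
  refine ⟨hmem, ?_⟩
  by_contra hcon
  push_neg at hcon
  have h2 : hitCount T g x t + 1 ≤ hitCount T g x t := le_csSup hbdd hcon
  omega

lemma hitCount_eq_zero (hm : 0 < m) (hg : ∀ x, m ≤ g x) (x : ℝ) {t : ℝ} (ht : t < 0) :
    hitCount T g x t = 0 := by
  have h : {r : ℕ | birkSum T g r x ≤ t} = ∅ := by
    ext r
    simp only [Set.mem_setOf_eq, Set.mem_empty_iff_false, iff_false, not_le]
    calc t < 0 := ht
      _ ≤ (r : ℝ) * m := by positivity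
      _ ≤ birkSum T g r x := birkSum_ge hg r x
  rw [hitCount, h, csSup_empty]
  rfl

end aux

theorem kochergin_pullback_lemma (T f : ℝ → ℝ) (m : ℝ) (hm : 0 < m)
    (hf : ∀ x ∈ Set.Ico (0:ℝ) 1, m ≤ f x)
    (hTmaps : Set.MapsTo T (Set.Ico (0:ℝ) 1) (Set.Ico (0:ℝ) 1))
    (hT : MeasurePreserving T (volume.restrict (Set.Ico (0:ℝ) 1))
      (volume.restrict (Set.Ico (0:ℝ) 1)))
    (hfint : IntegrableOn f (Set.Ico (0:ℝ) 1))
    (t : ℝ) (S : Set ℝ) (hS : MeasurableSet S) (hSsub : S ⊆ Set.Ico (0:ℝ) 1) :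
    (volume.restrict (Set.Ico (0:ℝ) 1)) ((fun x => T^[hitCount T f x t] x) ⁻¹' S)
      ≤ ENNReal.ofReal (∫ x in S, (f x / m + 1)) := by
  set μ := volume.restrict (Set.Ico (0:ℝ) 1) with hμdef
  -- a measurable representative of `f` bounded below by `m` everywhere
  have hfae : AEMeasurable f μ := hfint.aemeasurable
  set g : ℝ → ℝ := fun x => max (hfae.mk f x) m with hgdef
  have hgmeas : Measurable g := hfae.measurable_mk.max measurable_const
  have hgm : ∀ x, m ≤ g x := fun x => le_max_right _ _
  have hfg : f =ᵐ[μ] g := by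
    have h1 : f =ᵐ[μ] hfae.mk f := hfae.ae_eq_mk
    have h2 : ∀ᵐ x ∂μ, x ∈ Set.Ico (0:ℝ) 1 := ae_restrict_mem measurableSet_Ico
    filter_upwards [h1, h2] with x hx hx2
    simp only [hgdef]
    rw [← hx, max_eq_left (hf x hx2)]
  -- `μ.restrict S = volume.restrict S`
  have hrS : μ.restrict S = volume.restrict S := by
    rw [hμdef, Measure.restrict_restrict hS, Set.inter_eq_left.2 hSsub]
  have hfgS : f =ᵐ[volume.restrict S] g := by
    rw [← hrS]; exact ae_restrict_of_ae hfg
  -- the integrals for f and g agree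
  have hint_eq : ∫ x in S, (f x / m + 1) = ∫ x in S, (g x / m + 1) := by
    apply integral_congr_ae
    filter_upwards [hfgS] with x hx
    rw [hx]
  -- integrability
  have hSfin : volume S < ⊤ := lt_of_le_of_lt (measure_mono hSsub) measure_Ico_lt_top
  have hfS : IntegrableOn f S := hfint.mono_set hSsub
  have hintS : Integrable (fun x => f x / m + 1) (volume.restrict S) :=
    (hfS.div_const m).add (integrableOn_const hSfin.ne)
  have hintSg : Integrable (fun x => g x / m + 1) (volume.restrict S) := by
    apply hintS.congr
    filter_upwards [hfgS] with x hx
    rw [hx]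
  -- reduce the preimage to the one defined with g
  have horb : ∀ᵐ x ∂μ, ∀ i : ℕ, f (T^[i] x) = g (T^[i] x) := by
    rw [ae_all_iff]
    intro i
    have h0 : μ {y | f y ≠ g y} = 0 := hfg
    have := ((hT.iterate i).quasiMeasurePreserving).preimage_null h0
    refine measure_mono_null ?_ this
    intro x hx
    exact hx
  have hPeq : μ ((fun x => T^[hitCount T f x t] x) ⁻¹' S)
      = μ ((fun x => T^[hitCount T g x t] x) ⁻¹' S) := by
    apply measure_congr
    apply Filter.eventuallyEq_set.2
    filter_upwards [horb] with x hx
    have hb : ∀ r, birkSum T f r x = birkSum T g r x := fun r =>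
      Finset.sum_congr rfl fun i _ => hx i
    have hhc : hitCount T f x t = hitCount T g x t := by
      unfold hitCount
      congr 1
      ext r
      simp [hb r]
    simp [Set.mem_preimage, hhc]
  rw [hPeq, hint_eq]
  by_cases ht : 0 ≤ t
  · -- main case
    set K := Nat.floor (t / m) with hK
    set A : ℕ → Set ℝ := fun r =>
      (fun x => T^[r] x) ⁻¹' S ∩ {x | birkSum T g r x ≤ t ∧ t < birkSum T g (r + 1) x}
      with hA
    have hbm : ∀ r : ℕ, Measurable fun x => birkSum T g r x := by
      intro r
      apply Finset.measurable_sum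
      intro i _
      exact hgmeas.comp (hT.measurable.iterate i)
    have hAmeas : ∀ r, MeasurableSet (A r) := by
      intro r
      refine ((hT.measurable.iterate r) hS).inter ?_
      exact ((hbm r) measurableSet_Iic).inter (measurableSet_lt measurable_const (hbm (r+1)))
    have hPsub : ((fun x => T^[hitCount T g x t] x) ⁻¹' S) ⊆
        ⋃ r ∈ Finset.range (K + 1), A r := by
      intro x hx
      have hspec := hitCount_spec (T:=T) (g:=g) hm hgm x ht
      refine Set.mem_iUnion₂.2 ⟨hitCount T g x t,
        Finset.mem_range.2 (Nat.lt_succ_of_le (hitCount_le (T:=T) (g:=g) hm hgm x t)),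
        hx, hspec.1, hspec.2⟩
    set C : ℕ → Set ℝ := fun r => (T^[K - r]) ⁻¹' (A r) with hC
    have hCmeas : ∀ r, MeasurableSet (C r) := fun r =>
      (hT.measurable.iterate (K - r)) (hAmeas r)
    have hmeasAC : ∀ r, μ (A r) = μ (C r) := fun r =>
      ((hT.iterate (K - r)).measure_preimage (hAmeas r).nullMeasurableSet).symm
    -- the key pointwise counting bound
    have key : ∀ x, (∑ r ∈ Finset.range (K + 1),
          (C r).indicator (fun _ => (1 : ℝ≥0∞)) x)
        ≤ Set.indicator S (fun y => ENNReal.ofReal (g y / m + 1)) (T^[K] x) := by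
      intro x
      classical
      have hsum : (∑ r ∈ Finset.range (K + 1), (C r).indicator (fun _ => (1 : ℝ≥0∞)) x)
          = (((Finset.range (K + 1)).filter (fun r => x ∈ C r)).card : ℝ≥0∞) := by
        rw [Finset.card_filter]
        push_cast
        apply Finset.sum_congr rfl
        intro r _
        simp [Set.indicator_apply]
      rw [hsum]
      set M := (Finset.range (K + 1)).filter (fun r => x ∈ C r) with hM
      rcases M.eq_empty_or_nonempty with hMe | hMne
      · rw [hMe]; simp
      -- facts about members of M
      set Φ : ℕ → ℝ := fun r => birkSum T g r (T^[K - r] x) with hΦ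
      set G : ℝ := g (T^[K] x) with hG
      have hmemC : ∀ r ∈ M, r ≤ K ∧ T^[K] x ∈ S ∧ Φ r ≤ t ∧ t < Φ r + G := by
        intro r hr
        rw [hM, Finset.mem_filter, Finset.mem_range] at hr
        obtain ⟨hrK, hxC⟩ := hr
        have hrK' : r ≤ K := Nat.lt_succ_iff.1 hrK
        have hiter : T^[r] (T^[K - r] x) = T^[K] x := by
          rw [← Function.iterate_add_apply]
          congr 1
          omega
        obtain ⟨h1, h2, h3⟩ := hxC
        rw [Set.mem_preimage, hiter] at h1
        rw [birkSum_succ, hiter] at h3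
        exact ⟨hrK', h1, h2, h3⟩
      -- the gap property of Φ
      have hstep : ∀ s : ℕ, s < K → Φ s + m ≤ Φ (s + 1) := by
        intro s hs
        have heq : Φ (s + 1) = g (T^[K - (s + 1)] x) + Φ s := by
          show birkSum T g (s + 1) (T^[K - (s+1)] x) = _
          rw [birkSum]
          rw [Finset.sum_range_succ']
          have hTy : T (T^[K - (s+1)] x) = T^[K - s] x := by
            have h' : K - s = (K - (s+1)) + 1 := by omega
            rw [h', Function.iterate_succ_apply']
          have : ∀ i, T^[i + 1] (T^[K - (s+1)] x) = T^[i] (T^[K - s] x) := by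
            intro i
            rw [Function.iterate_succ_apply, hTy]
          simp only [this]
          rw [add_comm]
          rfl
        have := hgm (T^[K - (s + 1)] x)
        linarith [heq]
      have hmono : ∀ r s : ℕ, r ≤ s → s ≤ K → Φ r + ((s - r : ℕ) : ℝ) * m ≤ Φ s := by
        intro r s hrs hsK
        induction s, hrs using Nat.le_induction with
        | base => simp
        | succ n hn ih =>
          have hnK : n < K := by omega
          have h1 := ih (by omega)
          have h2 := hstep n hnK
          have hcast : ((n + 1 - r : ℕ) : ℝ) = ((n - r : ℕ) : ℝ) + 1 := by
            have h' : n + 1 - r = (n - r) + 1 := by omega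
            rw [h']
            push_cast
            ring
          rw [hcast]
          nlinarith
      obtain ⟨r0, hr0⟩ := hMne
      set r1 := M.min' ⟨r0, hr0⟩ with hr1
      set r2 := M.max' ⟨r0, hr0⟩ with hr2
      have h1 := hmemC r1 (M.min'_mem _)
      have h2 := hmemC r2 (M.max'_mem _)
      have hr12 : r1 ≤ r2 := M.min'_le _ (M.max'_mem _)
      have hgap : Φ r1 + ((r2 - r1 : ℕ) : ℝ) * m ≤ Φ r2 := hmono r1 r2 hr12 h2.1
      have hlt : ((r2 - r1 : ℕ) : ℝ) * m < G := by
        have := h2.2.2.1  -- Φ r2 ≤ t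
        have := h1.2.2.2  -- t < Φ r1 + G
        linarith
      have hdiv : ((r2 - r1 : ℕ) : ℝ) < G / m := (lt_div_iff₀ hm).2 hlt
      have hcard : M.card ≤ r2 - r1 + 1 := by
        have hsub : M ⊆ Finset.Icc r1 r2 := by
          intro a ha
          exact Finset.mem_Icc.2 ⟨M.min'_le _ ha, M.le_max' _ ha⟩
        have := Finset.card_le_card hsub
        rwa [Nat.card_Icc, Nat.sub_add_comm hr12] at this
      have hcardR : (M.card : ℝ) ≤ G / m + 1 := by
        have h3 : (M.card : ℝ) ≤ ((r2 - r1 : ℕ) : ℝ) + 1 := by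
          exact_mod_cast hcard
        linarith
      rw [Set.indicator_of_mem h1.2.1, ← ENNReal.ofReal_natCast]
      exact ENNReal.ofReal_le_ofReal hcardR
    -- now integrate
    calc μ ((fun x => T^[hitCount T g x t] x) ⁻¹' S)
        ≤ μ (⋃ r ∈ Finset.range (K + 1), A r) := measure_mono hPsub
      _ ≤ ∑ r ∈ Finset.range (K + 1), μ (A r) := measure_biUnion_finset_le _ _
      _ = ∑ r ∈ Finset.range (K + 1), μ (C r) := Finset.sum_congr rfl fun r _ => hmeasAC r
      _ = ∑ r ∈ Finset.range (K + 1),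
            ∫⁻ x, (C r).indicator (fun _ => (1 : ℝ≥0∞)) x ∂μ := by
          exact Finset.sum_congr rfl fun r _ => (lintegral_indicator_one (hCmeas r)).symm
      _ = ∫⁻ x, ∑ r ∈ Finset.range (K + 1), (C r).indicator (fun _ => (1 : ℝ≥0∞)) x ∂μ := by
          rw [lintegral_finset_sum]
          intro r _
          exact measurable_const.indicator (hCmeas r)
      _ ≤ ∫⁻ x, Set.indicator S (fun y => ENNReal.ofReal (g y / m + 1)) (T^[K] x) ∂μ :=
          lintegral_mono key
      _ = ∫⁻ y, Set.indicator S (fun y => ENNReal.ofReal (g y / m + 1)) y ∂μ := by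
          apply (hT.iterate K).lintegral_comp
          exact (ENNReal.measurable_ofReal.comp ((hgmeas.div_const m).add measurable_const)).indicator hS
      _ = ∫⁻ y in S, ENNReal.ofReal (g y / m + 1) ∂μ := lintegral_indicator hS _
      _ = ∫⁻ y in S, ENNReal.ofReal (g y / m + 1) ∂volume := by rw [hrS]
      _ = ENNReal.ofReal (∫ y in S, (g y / m + 1)) := by
          have hnn : 0 ≤ᵐ[volume.restrict S] fun x : ℝ => g x / m + 1 := by
            refine Filter.Eventually.of_forall fun x => ?_
            show (0:ℝ) ≤ g x / m + 1
            have h2 : (0:ℝ) ≤ g x / m := div_nonneg (hm.le.trans (hgm x)) hm.le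
            linarith
          rw [ofReal_integral_eq_lintegral_ofReal hintSg hnn]
  · -- t < 0 : the map is the identity
    push_neg at ht
    have hP : ((fun x => T^[hitCount T g x t] x) ⁻¹' S) = S := by
      ext x
      rw [Set.mem_preimage, hitCount_eq_zero hm hgm x ht]
      simp
    rw [hP, hμdef, Measure.restrict_apply hS, Set.inter_eq_left.2 hSsub]
    have h1 : volume S = ENNReal.ofReal ((volume S).toReal) :=
      (ENNReal.ofReal_toReal hSfin.ne).symm
    rw [h1]
    apply ENNReal.ofReal_le_ofReal
    have h2 : (volume S).toReal = ∫ _x in S, (1 : ℝ) := by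
      rw [setIntegral_const, smul_eq_mul, mul_one, measureReal_def]
    rw [h2]
    apply setIntegral_mono_on (integrableOn_const hSfin.ne) hintSg hS
    intro x hx
    show (1:ℝ) ≤ g x / m + 1
    have h2 : (0:ℝ) ≤ g x / m := div_nonneg (hm.le.trans (hgm x)) hm.le
    linarith
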